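/- Let A be an n×n real symmetric matrix, σ* ∈ {±1}ⁿ, and Y* = σ*(σ*)ᵀ. Suppose there exists a diagonal matrix D* such that S* := D* - A satisfies: S* is positive semidefinite, the second smallest eigenvalue of S* is strictly positive, and S*σ* = 0. Then Y* is the unique maximizer of ⟨A,Y⟩ over all symmetric positive semidefinite matrices Y with Yᵢᵢ = 1 for all i ∈ [n]. -/

import Mathlib

open Matrix

/-- Trace inner product `⟨A,Y⟩ = ∑ᵢⱼ Aᵢⱼ Yᵢⱼ`. -/
def traceInner {n : ℕ} (A Y : Matrix (Fin n) (Fin n) ℝ) : ℝ :=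
  ∑ i, ∑ j, A i j * Y i j

lemma traceInner_sub {n : ℕ} (A B Y : Matrix (Fin n) (Fin n) ℝ) :
    traceInner (A - B) Y = traceInner A Y - traceInner B Y := by
  simp [traceInner, Matrix.sub_apply, sub_mul, Finset.sum_sub_distrib]

lemma traceInner_diagonal {n : ℕ} (d : Fin n → ℝ) (Y : Matrix (Fin n) (Fin n) ℝ)
    (hY : ∀ i, Y i i = 1) : traceInner (Matrix.diagonal d) Y = ∑ i, d i := by
  unfold traceInner
  refine Finset.sum_congr rfl fun i _ => ?_
  rw [Finset.sum_eq_single i]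
  · simp [hY i]
  · intro j _ hj; simp [Matrix.diagonal_apply, (Ne.symm hj)]
  · simp

lemma traceInner_decomp {n : ℕ} (S B : Matrix (Fin n) (Fin n) ℝ) :
    traceInner S (Bᴴ * B) = ∑ k, (B k) ⬝ᵥ S.mulVec (B k) := by
  unfold traceInner
  have key : ∀ i, ∑ j, S i j * (Bᴴ * B) i j = ∑ j, ∑ k, B k i * (S i j * B k j) := by
    intro i
    refine Finset.sum_congr rfl fun j _ => ?_
    simp only [Matrix.mul_apply, Matrix.conjTranspose_apply, star_trivial, Finset.mul_sum]
    exact Finset.sum_congr rfl fun k _ => by ring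
  rw [Finset.sum_congr rfl fun i _ => key i]
  rw [Finset.sum_congr rfl fun i _ => Finset.sum_comm, Finset.sum_comm]
  refine Finset.sum_congr rfl fun k _ => ?_
  simp only [dotProduct, Matrix.mulVec, Finset.mul_sum]

open scoped MatrixOrder in
lemma psd_exists_factor {n : ℕ} (Y : Matrix (Fin n) (Fin n) ℝ) (h : Y.PosSemidef) :
    ∃ B : Matrix (Fin n) (Fin n) ℝ, Y = Bᴴ * B := by
  obtain ⟨B, hB⟩ := CStarAlgebra.nonneg_iff_eq_star_mul_self.mp h.nonneg
  exact ⟨B, hB⟩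

lemma psd_quadform_zero {n : ℕ} (S : Matrix (Fin n) (Fin n) ℝ) (hpsd : S.PosSemidef)
    (x : Fin n → ℝ) (h : x ⬝ᵥ S.mulVec x = 0) : S.mulVec x = 0 := by
  obtain ⟨M, hM⟩ := psd_exists_factor S hpsd
  have hv : x ᵥ* Mᴴ = M.mulVec x := by
    rw [Matrix.vecMul_conjTranspose]; simp
  have hMx : M.mulVec x = 0 := by
    rw [← dotProduct_self_eq_zero]
    have : x ⬝ᵥ S.mulVec x = (M.mulVec x) ⬝ᵥ (M.mulVec x) := by
      rw [hM, ← Matrix.mulVec_mulVec, Matrix.dotProduct_mulVec, hv]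
    rw [← this, h]
  rw [hM, ← Matrix.mulVec_mulVec, hMx, Matrix.mulVec_zero]

theorem sdp_dual_certificate_censored {n : ℕ}
    (A : Matrix (Fin n) (Fin n) ℝ) (hA : A.IsSymm)
    (σ : Fin n → ℝ) (hσ : ∀ i, σ i = 1 ∨ σ i = -1)
    (d : Fin n → ℝ)
    (Ystar : Matrix (Fin n) (Fin n) ℝ) (hYstar : Ystar = Matrix.of fun i j => σ i * σ j)
    (S : Matrix (Fin n) (Fin n) ℝ)
    (hS : S = Matrix.diagonal d - A)
    (hpsd : S.PosSemidef)
    (hker : ∀ x : Fin n → ℝ, S.mulVec x = 0 → ∃ c : ℝ, x = c • σ)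
    (hSσ : S.mulVec σ = 0) :
    ∀ Y : Matrix (Fin n) (Fin n) ℝ,
      Y.PosSemidef → (∀ i, Y i i = 1) →
        traceInner A Y ≤ traceInner A Ystar ∧
        (traceInner A Y = traceInner A Ystar → Y = Ystar) := by
  intro Y hYpsd hYdiag
  have hσsq : ∀ i, σ i * σ i = 1 := by
    intro i; rcases hσ i with h | h <;> rw [h] <;> norm_num
  have hYstardiag : ∀ i, Ystar i i = 1 := by
    intro i; rw [hYstar]; exact hσsq i
  have hAeq : A = Matrix.diagonal d - S := by rw [hS]; abel
  have hval : ∀ Z : Matrix (Fin n) (Fin n) ℝ, (∀ i, Z i i = 1) →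
      traceInner A Z = (∑ i, d i) - traceInner S Z := by
    intro Z hZ
    rw [hAeq, traceInner_sub, traceInner_diagonal d Z hZ]
  have hSYstar : traceInner S Ystar = 0 := by
    unfold traceInner
    have key : ∀ i : Fin n, ∑ j, S i j * Ystar i j = σ i * (S.mulVec σ) i := by
      intro i
      rw [hYstar]
      simp only [Matrix.mulVec, dotProduct, Matrix.of_apply, Finset.mul_sum]
      exact Finset.sum_congr rfl fun j _ => by ring
    rw [Finset.sum_congr rfl fun i _ => key i]
    simp [hSσ]
  obtain ⟨B, hB⟩ := psd_exists_factor Y hYpsd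
  have hSY : traceInner S Y = ∑ k, (B k) ⬝ᵥ S.mulVec (B k) := by
    rw [hB]; exact traceInner_decomp S B
  have hterm_nonneg : ∀ k, 0 ≤ (B k) ⬝ᵥ S.mulVec (B k) := fun k => by simpa using hpsd.dotProduct_mulVec_nonneg (B k)
  have hSYnonneg : 0 ≤ traceInner S Y := by
    rw [hSY]; exact Finset.sum_nonneg fun k _ => hterm_nonneg k
  constructor
  · rw [hval Y hYdiag, hval Ystar hYstardiag, hSYstar]
    linarith
  · intro heq
    have hSY0 : ∑ k, (B k) ⬝ᵥ S.mulVec (B k) = 0 := by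
      rw [← hSY]
      rw [hval Y hYdiag, hval Ystar hYstardiag, hSYstar] at heq
      linarith
    have hterm0 := (Finset.sum_eq_zero_iff_of_nonneg (fun k _ => hterm_nonneg k)).mp hSY0
    have hrows : ∀ k, ∃ c : ℝ, B k = c • σ := fun k =>
      hker _ (psd_quadform_zero S hpsd (B k) (hterm0 k (Finset.mem_univ k)))
    choose c hc using hrows
    have hYform : ∀ i j, Y i j = (∑ k, c k ^ 2) * (σ i * σ j) := by
      intro i j
      rw [hB]
      simp only [Matrix.mul_apply, Matrix.conjTranspose_apply, star_trivial]
      rw [Finset.sum_mul]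
      refine Finset.sum_congr rfl fun k _ => ?_
      rw [hc k]
      simp only [Pi.smul_apply, smul_eq_mul]
      ring
    ext i j
    have hdiag := hYdiag i
    rw [hYform i i, hσsq i, mul_one] at hdiag
    rw [hYform i j, hdiag, one_mul, hYstar]
    rfl
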